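/- Any nice path decomposition of a graph G respecting a valid quintuple Q has width at least locpw(Q). -/

import Mathlib

open scoped Classical

noncomputable section

/-- Operations labelling the nodes of a nice tree decomposition.  For a `join`
we record the trace of the bag on the vertex cover together with the traces of
the lower sets of the two children. -/
inductive TDOp (V : Type) where
  | introduce (u : V)
  | forget (u : V)
  | join (X L1 L2 : Set V)

/-- `i` is an ancestor of `j` (inclusively) with respect to the parent function `parent`. -/
def ancestorOf {ι : Type} (parent : ι → ι) (i j : ι) : Prop :=
  ∃ n : ℕ, parent^[n] j = i

/-- `k` lies on the unique tree path between `i` and `j` in the rooted tree given by `parent`. -/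
def betweenNodes {ι : Type} (parent : ι → ι) (k i j : ι) : Prop :=
  (ancestorOf parent k i ∨ ancestorOf parent k j) ∧
    ∀ l, ancestorOf parent l i → ancestorOf parent l j → ancestorOf parent l k

/-- A rooted tree decomposition of a graph `G`, encoded via a parent function on the
node set `ι`:  every node reaches the root by iterating `parent`; the bags cover the
vertices and the edges, and the set of bags containing a fixed vertex is connected
(it is closed under taking nodes on tree paths). -/
structure RootedTreeDecomp (V ι : Type) (G : SimpleGraph V) where
  root : ι
  parent : ι → ι
  parent_root : parent root = root
  reaches_root : ∀ i, ancestorOf parent root i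
  bag : ι → Finset V
  bag_cover : ∀ v, ∃ i, v ∈ bag i
  bag_edge : ∀ u v, G.Adj u v → ∃ i, u ∈ bag i ∧ v ∈ bag i
  bag_conn : ∀ v i j k, v ∈ bag i → v ∈ bag j → betweenNodes parent k i j → v ∈ bag k

namespace RootedTreeDecomp

variable {V ι : Type} {G : SimpleGraph V} (t : RootedTreeDecomp V ι G)

/-- `i` is an ancestor of `j` (inclusively). -/
def anc (i j : ι) : Prop := ancestorOf t.parent i j

/-- `V_i` : the union of the bags of the subtree rooted at `i`. -/
def subVerts (i : ι) : Set V := {v | ∃ j, t.anc i j ∧ v ∈ t.bag j}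

/-- `L_i = V_i ∖ X_i`. -/
def Lset (i : ι) : Set V := t.subVerts i \ ↑(t.bag i)

/-- `R_i = V ∖ V_i`. -/
def Rset (i : ι) : Set V := Set.univ \ t.subVerts i

/-- The trace of node `i` on `C` is the three-partition `(L_i ∩ C, X_i ∩ C, R_i ∩ C)` of `C`. -/
def HasTrace (C : Set V) (i : ι) (LC XC RC : Set V) : Prop :=
  LC = t.Lset i ∩ C ∧ XC = (↑(t.bag i) : Set V) ∩ C ∧ RC = t.Rset i ∩ C

/-- The children of a node. -/
def children (i : ι) : Set ι := {j | j ≠ t.root ∧ t.parent j = i}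

/-- A leaf node: no children and a bag of size one. -/
def IsLeafNode (i : ι) : Prop := t.children i = ∅ ∧ ∃ u, t.bag i = {u}

/-- An introduce node. -/
def IsIntroduceNode [DecidableEq V] (i : ι) : Prop :=
  ∃ j u, t.children i = {j} ∧ u ∉ t.bag j ∧ t.bag i = insert u (t.bag j)

/-- A forget node. -/
def IsForgetNode [DecidableEq V] (i : ι) : Prop :=
  ∃ j u, t.children i = {j} ∧ u ∈ t.bag j ∧ t.bag i = (t.bag j).erase u

/-- A join node. -/
def IsJoinNode (i : ι) : Prop :=
  ∃ j k, j ≠ k ∧ t.children i = ({j, k} : Set ι) ∧ t.bag j = t.bag i ∧ t.bag k = t.bag i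

/-- A nice tree decomposition: every node is a leaf, introduce, forget or join node. -/
def IsNice [DecidableEq V] : Prop :=
  ∀ i, t.IsLeafNode i ∨ t.IsIntroduceNode i ∨ t.IsForgetNode i ∨ t.IsJoinNode i

/-- A nice path decomposition: every node is a leaf, introduce or forget node. -/
def IsNicePath [DecidableEq V] : Prop :=
  ∀ i, t.IsLeafNode i ∨ t.IsIntroduceNode i ∨ t.IsForgetNode i

/-- The operation `op` is the operation `τ_i` performed at node `i`
(join operations are recorded through their traces on the vertex cover `C`). -/
def HasOp [DecidableEq V] (C : Set V) (i : ι) : TDOp V → Prop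
  | TDOp.introduce u =>
      (t.children i = ∅ ∧ t.bag i = {u}) ∨
        ∃ j, t.children i = {j} ∧ u ∉ t.bag j ∧ t.bag i = insert u (t.bag j)
  | TDOp.forget u =>
      ∃ j, t.children i = {j} ∧ u ∈ t.bag j ∧ t.bag i = (t.bag j).erase u
  | TDOp.join X L1 L2 =>
      ∃ j k, j ≠ k ∧ t.children i = ({j, k} : Set ι) ∧ t.bag j = t.bag i ∧ t.bag k = t.bag i ∧
        X = (↑(t.bag i) : Set V) ∩ C ∧ L1 = t.Lset j ∩ C ∧ L2 = t.Lset k ∩ C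

/-- The width of a rooted tree decomposition: maximum bag size minus one. -/
def width [Fintype ι] : ℕ := (Finset.univ.sup fun i => (t.bag i).card) - 1

end RootedTreeDecomp

/-- A quintuple `(τ₋, L^C, X^C, R^C, τ₊)`. -/
structure TDQuint (V : Type) where
  tauL : TDOp V
  LC : Set V
  XC : Set V
  RC : Set V
  tauR : TDOp V

/-- `C` is a vertex cover of `G`. -/
def IsVertexCover {V : Type} (G : SimpleGraph V) (C : Set V) : Prop :=
  ∀ u v, G.Adj u v → u ∈ C ∨ v ∈ C

/-- `X` separates `A` from `B` in the subgraph of `G` induced by `D`: there is no walk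
between a vertex of `A` and a vertex of `B` all of whose vertices avoid `X` and stay in `D`. -/
def SeparatesIn {V : Type} (G : SimpleGraph V) (D X A B : Set V) : Prop :=
  ∀ a ∈ A, ∀ b ∈ B, ¬ ∃ p : G.Walk a b, ∀ v ∈ p.support, v ∈ D \ X

/-- `(LC, XC, RC)` is a valid partition of `C`: it is the trace on `C` of some node of some
rooted tree decomposition of `G`. -/
def ValidPartition {V : Type} (G : SimpleGraph V) (C LC XC RC : Set V) : Prop :=
  ∃ (ι : Type) (t : RootedTreeDecomp V ι G) (i : ι), t.HasTrace C i LC XC RC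

section

variable {V ι : Type} [DecidableEq V] {G : SimpleGraph V}

/-- The decomposition `t` respects the (non-degenerate) quintuple `Q`, with `imin` and `imax`
as lowest and highest nodes of the subpath of nodes whose trace on `C` is `(LC, XC, RC)`:
the operation at `imin` is `τ₋`, and the operation at the father of `imax` is `τ₊`
(taken to be `forget w` on the root bag `{w}` when `imax` is the root). -/
def RespectsAtND (t : RootedTreeDecomp V ι G) (C : Set V) (Q : TDQuint V)
    (imin imax : ι) : Prop :=
  t.HasTrace C imin Q.LC Q.XC Q.RC ∧ t.HasTrace C imax Q.LC Q.XC Q.RC ∧ t.anc imax imin ∧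
    (∀ i, t.HasTrace C i Q.LC Q.XC Q.RC → t.anc i imin ∧ t.anc imax i) ∧
    t.HasOp C imin Q.tauL ∧
    ((imax = t.root ∧ ∃ w, t.bag t.root = {w} ∧ Q.tauR = TDOp.forget w) ∨
      (imax ≠ t.root ∧ t.HasOp C (t.parent imax) Q.tauR))

/-- The decomposition `t` respects the degenerate quintuple `Q` at node `i`: node `i` has
trace `(∅, XC, RC)` on `C` and its father performs the forget operation `τ₊`. -/
def RespectsAtDeg (t : RootedTreeDecomp V ι G) (C : Set V) (Q : TDQuint V) (i : ι) : Prop :=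
  t.HasTrace C i Q.LC Q.XC Q.RC ∧
    ∃ u, Q.tauR = TDOp.forget u ∧ i ≠ t.root ∧ t.HasOp C (t.parent i) (TDOp.forget u)

/-- The decomposition `t` respects the quintuple `Q`, witnessed by the nodes `imin`, `imax`. -/
def RespectsAt (t : RootedTreeDecomp V ι G) (C : Set V) (Q : TDQuint V)
    (imin imax : ι) : Prop :=
  (Q.LC ≠ ∅ ∧ RespectsAtND t C Q imin imax) ∨
    (Q.LC = ∅ ∧ imin = imax ∧ RespectsAtDeg t C Q imax)

/-- The decomposition `t` respects the quintuple `Q`. -/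
def Respects (t : RootedTreeDecomp V ι G) (C : Set V) (Q : TDQuint V) : Prop :=
  ∃ imin imax, RespectsAt t C Q imin imax

end

/-- Valid quintuples (tree-decomposition version), including the degenerate ones. -/
def ValidQuintT {V : Type} [DecidableEq V] (G : SimpleGraph V) (C : Set V)
    (Q : TDQuint V) : Prop :=
  (Q.LC ≠ ∅ ∧ ∃ (ι : Type) (t : RootedTreeDecomp V ι G), t.IsNice ∧ Respects t C Q) ∨
    (Q.LC = ∅ ∧ ValidPartition G C ∅ Q.XC Q.RC ∧
      ∃ u, u ∈ Q.XC ∧ G.neighborSet u ⊆ Q.XC ∧ Q.tauR = TDOp.forget u)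

/-- Valid quintuples (path-decomposition version): `Q` is respected by some nice path
decomposition of `G`. -/
def ValidQuintP {V : Type} [DecidableEq V] (G : SimpleGraph V) (C : Set V)
    (Q : TDQuint V) : Prop :=
  ∃ (ι : Type) (t : RootedTreeDecomp V ι G), t.IsNicePath ∧
    ∃ imin imax, RespectsAtND t C Q imin imax

section

variable {V : Type} [DecidableEq V]

/-- `XTR^S(Q)`: vertices of `S = V ∖ C` having neighbours in both `L^C` and `R^C`. -/
def XTRset (G : SimpleGraph V) (C : Set V) (Q : TDQuint V) : Set V :=
  {x | x ∉ C ∧ (G.neighborSet x ∩ Q.LC).Nonempty ∧ (G.neighborSet x ∩ Q.RC).Nonempty}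

/-- `XL^S(Q)`. -/
def XLset (G : SimpleGraph V) (C : Set V) (Q : TDQuint V) : Set V :=
  match Q.tauL with
  | TDOp.introduce u =>
      {x | x ∉ C ∧ G.neighborSet x ⊆ Q.LC ∪ Q.XC ∧ u ∈ G.neighborSet x ∧
        (G.neighborSet x ∩ Q.LC).Nonempty}
  | TDOp.forget _ => ∅
  | TDOp.join _ L1 L2 =>
      {x | x ∉ C ∧ (G.neighborSet x ∩ L1).Nonempty ∧ (G.neighborSet x ∩ L2).Nonempty ∧
        G.neighborSet x ∩ Q.RC = ∅}

/-- `XR^S(Q)`. -/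
def XRset (G : SimpleGraph V) (C : Set V) (Q : TDQuint V) : Set V :=
  match Q.tauR with
  | TDOp.forget v =>
      {x | x ∉ C ∧ G.neighborSet x ⊆ Q.RC ∪ Q.XC ∧ v ∈ G.neighborSet x ∧
        (G.neighborSet x ∩ Q.RC).Nonempty}
  | _ => ∅

/-- `ε(Q)` (treewidth version): `1` if some vertex of `S` has neighbourhood exactly `X^C`. -/
def epsT (G : SimpleGraph V) (C : Set V) (Q : TDQuint V) : ℕ :=
  if ∃ x, x ∉ C ∧ G.neighborSet x = Q.XC then 1 else 0

/-- The local treewidth of a quintuple. -/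
def loctw (G : SimpleGraph V) (C : Set V) (Q : TDQuint V) : ℕ :=
  Q.XC.ncard +
    max (max ((XTRset G C Q).ncard + (XLset G C Q).ncard)
      ((XTRset G C Q).ncard + (XRset G C Q).ncard)) (epsT G C Q) - 1

/-- Fuelled version of the partial treewidth recursion. -/
def ptwAux (G : SimpleGraph V) (C : Set V) : ℕ → TDQuint V → ℕ
  | 0, Q => loctw G C Q
  | m + 1, Q =>
    if Q.LC = ∅ then loctw G C Q
    else
      match Q.tauL with
      | TDOp.introduce u =>
          max (loctw G C Q)
            (sInf {n | ∃ τ,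
              ValidQuintT G C ⟨τ, Q.LC, Q.XC \ {u}, Q.RC ∪ {u}, TDOp.introduce u⟩ ∧
              n = ptwAux G C m ⟨τ, Q.LC, Q.XC \ {u}, Q.RC ∪ {u}, TDOp.introduce u⟩})
      | TDOp.forget u =>
          max (loctw G C Q)
            (sInf {n | ∃ τ,
              ValidQuintT G C ⟨τ, Q.LC \ {u}, Q.XC ∪ {u}, Q.RC, TDOp.forget u⟩ ∧
              n = ptwAux G C m ⟨τ, Q.LC \ {u}, Q.XC ∪ {u}, Q.RC, TDOp.forget u⟩})
      | TDOp.join _ L1 L2 =>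
          max (loctw G C Q)
            (max
              (sInf {n | ∃ τ,
                ValidQuintT G C ⟨τ, L1, Q.XC, Q.RC ∪ L2, TDOp.join Q.XC L1 L2⟩ ∧
                n = ptwAux G C m ⟨τ, L1, Q.XC, Q.RC ∪ L2, TDOp.join Q.XC L1 L2⟩})
              (sInf {n | ∃ τ,
                ValidQuintT G C ⟨τ, L2, Q.XC, Q.RC ∪ L1, TDOp.join Q.XC L1 L2⟩ ∧
                n = ptwAux G C m ⟨τ, L2, Q.XC, Q.RC ∪ L1, TDOp.join Q.XC L1 L2⟩}))

/-- The partial treewidth `ptw(Q)` of a quintuple (defined with sufficient fuel: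
each recursive step strictly decreases `2·|L^C| + |X^C|`). -/
def ptw (G : SimpleGraph V) (C : Set V) (Q : TDQuint V) : ℕ :=
  ptwAux G C (2 * Q.LC.ncard + Q.XC.ncard) Q

/-- `X^C_-` : the bag trace just below `imin`. -/
def XCminus (Q : TDQuint V) : Set V :=
  match Q.tauL with
  | TDOp.introduce u => Q.XC \ {u}
  | TDOp.forget u => Q.XC ∪ {u}
  | TDOp.join _ _ _ => Q.XC

/-- `X^C_+` : the bag trace just above `imax`. -/
def XCplus (Q : TDQuint V) : Set V :=
  match Q.tauR with
  | TDOp.introduce v => Q.XC ∪ {v}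
  | TDOp.forget v => Q.XC \ {v}
  | TDOp.join _ _ _ => Q.XC

/-- `XF^S(Q)` (pathwidth version). -/
def XFPset (G : SimpleGraph V) (C : Set V) (Q : TDQuint V) : Set V :=
  {x | x ∉ C ∧ G.neighborSet x ⊆ Q.XC ∧
    (XCminus Q ⊂ Q.XC → ¬ G.neighborSet x ⊆ XCminus Q) ∧
    (XCplus Q ⊂ Q.XC → ¬ G.neighborSet x ⊆ XCplus Q)}

/-- `ε(Q)` (pathwidth version). -/
def epsP (G : SimpleGraph V) (C : Set V) (Q : TDQuint V) : ℕ :=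
  if (XFPset G C Q).Nonempty then 1 else 0

/-- The local pathwidth of a quintuple. -/
def locpw (G : SimpleGraph V) (C : Set V) (Q : TDQuint V) : ℕ :=
  Q.XC.ncard + (XTRset G C Q).ncard +
    max (max (XLset G C Q).ncard (XRset G C Q).ncard) (epsP G C Q) - 1

/-- Fuelled version of the partial pathwidth recursion. -/
def ppwAux (G : SimpleGraph V) (C : Set V) : ℕ → TDQuint V → ℕ
  | 0, Q => locpw G C Q
  | m + 1, Q =>
    if ∃ u, Q.tauL = TDOp.introduce u ∧ Q.LC = ∅ ∧ Q.XC = {u} ∧ Q.RC = C \ {u} then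
      locpw G C Q
    else
      match Q.tauL with
      | TDOp.introduce u =>
          max (locpw G C Q)
            (sInf {n | ∃ τ,
              ValidQuintP G C ⟨τ, Q.LC, Q.XC \ {u}, Q.RC ∪ {u}, TDOp.introduce u⟩ ∧
              n = ppwAux G C m ⟨τ, Q.LC, Q.XC \ {u}, Q.RC ∪ {u}, TDOp.introduce u⟩})
      | TDOp.forget u =>
          max (locpw G C Q)
            (sInf {n | ∃ τ,
              ValidQuintP G C ⟨τ, Q.LC \ {u}, Q.XC ∪ {u}, Q.RC, TDOp.forget u⟩ ∧
              n = ppwAux G C m ⟨τ, Q.LC \ {u}, Q.XC ∪ {u}, Q.RC, TDOp.forget u⟩})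
      | TDOp.join _ _ _ => locpw G C Q

/-- The partial pathwidth `ppw(Q)` of a quintuple. -/
def ppw (G : SimpleGraph V) (C : Set V) (Q : TDQuint V) : ℕ :=
  ppwAux G C (2 * Q.LC.ncard + Q.XC.ncard) Q

end

end

section AuxLemmas

open RootedTreeDecomp

variable {V ι : Type} {G : SimpleGraph V} (t : RootedTreeDecomp V ι G)

lemma aux_iter_pred {ι : Type} (f : ι → ι) (n : ℕ) (x : ι) (h : n ≠ 0) :
    f (f^[n - 1] x) = f^[n] x := by
  conv_rhs => rw [show n = (n - 1) + 1 from by omega]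
  exact (Function.iterate_succ_apply' f (n - 1) x).symm

lemma aux_anc_refl (i : ι) : t.anc i i := ⟨0, rfl⟩

lemma aux_anc_trans {i j k : ι} (h1 : t.anc i j) (h2 : t.anc j k) : t.anc i k := by
  obtain ⟨n, hn⟩ := h1; obtain ⟨m, hm⟩ := h2
  exact ⟨n + m, by rw [Function.iterate_add_apply, hm, hn]⟩

lemma aux_parent_anc {i j : ι} (h : t.parent j = i) : t.anc i j :=
  ⟨1, by simpa using h⟩

lemma aux_root_fix {i : ι} (h : t.parent i = i) : i = t.root := by
  obtain ⟨n, hn⟩ := t.reaches_root i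
  rw [Function.iterate_fixed h n] at hn
  exact hn

lemma aux_anc_antisymm {i j : ι} (h1 : t.anc i j) (h2 : t.anc j i) : i = j := by
  obtain ⟨n, hn⟩ := h1; obtain ⟨m, hm⟩ := h2
  rcases Nat.eq_zero_or_pos (n + m) with h0 | hpos
  · have hn0 : n = 0 := by omega
    subst hn0; exact hn.symm ▸ rfl
  · have hper : ∀ q : ℕ, (t.parent)^[(n + m) * q] i = i := by
      intro q; induction q with
      | zero => simp
      | succ q ih =>
        rw [Nat.mul_succ, Function.iterate_add_apply]
        rw [show (t.parent)^[n + m] i = i from by rw [Function.iterate_add_apply, hm, hn]]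
        exact ih
    obtain ⟨k, hk⟩ := t.reaches_root i
    have hik : i = t.root := by
      have h1 : (n + m) * k = ((n + m) * k - k) + k := by
        have : k ≤ (n + m) * k := Nat.le_mul_of_pos_left k hpos
        omega
      have := hper k
      rw [h1, Function.iterate_add_apply, hk, Function.iterate_fixed t.parent_root] at this
      exact this.symm
    have hjk : j = t.root := by
      rw [hik, Function.iterate_fixed t.parent_root] at hm; exact hm.symm
    rw [hik, hjk]

lemma aux_mem_children {i j : ι} : j ∈ t.children i ↔ j ≠ t.root ∧ t.parent j = i :=
  Iff.rfl

lemma aux_desc_child {i j : ι} (h : t.anc i j) (hne : i ≠ j) :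
    ∃ c, c ∈ t.children i ∧ t.anc c j := by
  classical
  have hex : ∃ n, (t.parent)^[n] j = i := h
  set n := Nat.find hex with hndef
  have hn : (t.parent)^[n] j = i := Nat.find_spec hex
  have hn0 : n ≠ 0 := by
    intro h0; rw [h0] at hn; exact hne hn.symm
  refine ⟨(t.parent)^[n - 1] j, ⟨?_, ?_⟩, ⟨n - 1, rfl⟩⟩
  · intro hc
    have hiroot : i = t.root := by
      rw [← hn, show n = (n-1) + 1 from by omega, Function.iterate_succ_apply', hc, t.parent_root]
    have : (t.parent)^[n - 1] j = i := by rw [hc, hiroot]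
    exact Nat.find_min hex (by omega : n - 1 < n) this
  · rw [aux_iter_pred t.parent n j hn0, hn]

lemma aux_convex {v : V} {a b c : ι} (ha : v ∈ t.bag a) (hb : v ∈ t.bag b)
    (h1 : t.anc c a) (h2 : t.anc b c) : v ∈ t.bag c :=
  t.bag_conn v a b c ha hb ⟨Or.inl h1, fun l _ hlb => aux_anc_trans t hlb h2⟩

lemma aux_child_uniq [DecidableEq V] (ht : t.IsNicePath) {i a b : ι}
    (ha : a ∈ t.children i) (hb : b ∈ t.children i) : a = b := by
  rcases ht i with h | h | h
  · rw [h.1] at ha; exact absurd ha (Set.notMem_empty a)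
  · obtain ⟨j, u, hch, -, -⟩ := h
    rw [hch] at ha hb
    exact (Set.mem_singleton_iff.mp ha).trans (Set.mem_singleton_iff.mp hb).symm
  · obtain ⟨j, u, hch, -, -⟩ := h
    rw [hch] at ha hb
    exact (Set.mem_singleton_iff.mp ha).trans (Set.mem_singleton_iff.mp hb).symm

lemma aux_total [DecidableEq V] (ht : t.IsNicePath) (i j : ι) : t.anc i j ∨ t.anc j i := by
  classical
  have hex : ∃ n, t.anc ((t.parent)^[n] i) j := by
    obtain ⟨k, hk⟩ := t.reaches_root i
    exact ⟨k, hk ▸ t.reaches_root j⟩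
  set n := Nat.find hex with hndef
  have hn : t.anc ((t.parent)^[n] i) j := Nat.find_spec hex
  rcases Nat.eq_zero_or_pos n with h0 | hpos
  · left; rw [h0] at hn; exact hn
  set l := (t.parent)^[n] i with hl
  set l' := (t.parent)^[n - 1] i with hl'
  have hpl' : t.parent l' = l := by
    rw [hl', hl, aux_iter_pred t.parent n i (by omega : n ≠ 0)]
  have hnl' : ¬ t.anc l' j := Nat.find_min hex (by omega : n - 1 < n)
  have hl'root : l' ≠ t.root := by
    intro h; exact hnl' (h ▸ t.reaches_root j)
  have hexm : ∃ m, (t.parent)^[m] j = l := hn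
  set m := Nat.find hexm with hmdef
  have hm : (t.parent)^[m] j = l := Nat.find_spec hexm
  rcases Nat.eq_zero_or_pos m with hm0 | hmpos
  · right; refine ⟨n, ?_⟩
    rw [hm0] at hm; simp only [Function.iterate_zero, id_eq] at hm
    rw [← hl]; exact hm.symm
  set c := (t.parent)^[m - 1] j with hc
  have hpc : t.parent c = l := by
    rw [hc, aux_iter_pred t.parent m j (by omega : m ≠ 0), hm]
  have hcroot : c ≠ t.root := by
    intro h
    have hlroot : l = t.root := by rw [← hpc, h, t.parent_root]
    exact Nat.find_min hexm (by omega : m - 1 < m) (by rw [← hc] at *; rw [hlroot, ← h])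
  have : c = l' := aux_child_uniq t ht (i := l) ⟨hcroot, hpc⟩ ⟨hl'root, hpl'⟩
  exact absurd (this ▸ ⟨m - 1, rfl⟩ : t.anc l' j) hnl'

lemma aux_subverts_child [DecidableEq V] (ht : t.IsNicePath) {i j : ι}
    (hch : t.children i = {j}) : t.subVerts i = ↑(t.bag i) ∪ t.subVerts j := by
  ext v
  constructor
  · rintro ⟨k, hk, hv⟩
    by_cases hki : k = i
    · exact Or.inl (by rw [← hki]; exact hv)
    · obtain ⟨c, hc, hck⟩ := aux_desc_child t hk (fun h => hki h.symm)
      rw [hch] at hc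
      exact Or.inr ⟨k, Set.mem_singleton_iff.mp hc ▸ hck, hv⟩
  · rintro (hv | ⟨k, hk, hv⟩)
    · exact ⟨i, aux_anc_refl t i, hv⟩
    · have hj : j ∈ t.children i := hch ▸ rfl
      exact ⟨k, aux_anc_trans t (aux_parent_anc t hj.2) hk, hv⟩

end AuxLemmas
theorem width_ge_locpw {V ι : Type} [Fintype V] [DecidableEq V] [Fintype ι]
    (G : SimpleGraph V) (C : Set V) (hC : IsVertexCover G C)
    (Q : TDQuint V) (hQ : ValidQuintP G C Q)
    (t : RootedTreeDecomp V ι G) (ht : t.IsNicePath)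
    (hresp : ∃ imin imax, RespectsAtND t C Q imin imax) :
    locpw G C Q ≤ t.width := by
  classical
  obtain ⟨imin, imax, himin, himax, hancm, hext, hopL, hRor⟩ := hresp
  have htot := aux_total t ht
  -- no join operations
  have hnjoin : ∀ (i : ι) (X L1 L2 : Set V), ¬ t.HasOp C i (TDOp.join X L1 L2) := by
    rintro i X L1 L2 ⟨j, k, hjk, hch, -⟩
    refine hjk (aux_child_uniq t ht (i := i) ?_ ?_)
    · rw [hch]; exact Set.mem_insert j {k}
    · rw [hch]; exact Set.mem_insert_of_mem j rfl
  -- basic disjointness facts about the trace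
  have hXCsub : Q.XC ⊆ C := by rw [himin.2.1]; exact Set.inter_subset_right
  have hLXdisj : ∀ y, y ∈ Q.LC → y ∈ Q.XC → False := by
    intro y hyL hyX
    rw [himin.1] at hyL; rw [himin.2.1] at hyX
    exact hyL.1.2 hyX.1
  have hRdisj : ∀ y, y ∈ Q.RC → y ∈ Q.LC ∪ Q.XC → False := by
    intro y hyR hy
    rw [himin.2.2] at hyR
    rcases hy with hy | hy
    · rw [himin.1] at hy; exact hyR.1.2 hy.1.1
    · rw [himin.2.1] at hy; exact hyR.1.2 ⟨imin, aux_anc_refl t imin, hy.1⟩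
  have hLdisj : ∀ y, y ∈ Q.LC → y ∈ Q.RC ∪ Q.XC → False := by
    intro y hyL hy
    rcases hy with hy | hy
    · exact hRdisj y hy (Or.inl hyL)
    · exact hLXdisj y hyL hy
  -- F1 : XC is in every bag on the chain
  have hXCbag : ∀ c ∈ Q.XC, ∀ i, t.anc i imin → t.anc imax i → c ∈ t.bag i := by
    intro c hc i h1 h2
    have hc1 : c ∈ t.bag imin := by
      have := himin.2.1 ▸ hc; exact this.1
    have hc2 : c ∈ t.bag imax := by
      have := himax.2.1 ▸ hc; exact this.1
    exact aux_convex t hc1 hc2 h1 h2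
  -- low bags from LC-neighbours
  have hlowbag : ∀ x a, a ∈ G.neighborSet x → a ∈ Q.LC →
      ∃ j, t.anc imin j ∧ j ≠ imin ∧ x ∈ t.bag j := by
    intro x a haN haL
    rw [himin.1] at haL
    obtain ⟨⟨⟨ja, hja, hab⟩, hanb⟩, haC⟩ := haL
    obtain ⟨j, hxj, haj⟩ := t.bag_edge x a haN
    have hij : t.anc imin j := by
      rcases htot imin j with h | h
      · exact h
      · exact absurd (aux_convex t hab haj hja h) hanb
    have hjne : j ≠ imin := by rintro rfl; exact hanb haj
    exact ⟨j, hij, hjne, hxj⟩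
  -- high bags from RC-neighbours
  have hhighbag : ∀ x b, b ∈ G.neighborSet x → b ∈ Q.RC →
      ∃ k, t.anc k imax ∧ k ≠ imax ∧ x ∈ t.bag k := by
    intro x b hbN hbR
    rw [himax.2.2] at hbR
    obtain ⟨⟨-, hbns⟩, hbC⟩ := hbR
    obtain ⟨k, hxk, hbk⟩ := t.bag_edge x b hbN
    have hnk : ¬ t.anc imax k := fun h => hbns ⟨k, h, hbk⟩
    rcases htot imax k with h | h
    · exact absurd h hnk
    · exact ⟨k, h, fun he => hnk (he ▸ aux_anc_refl t imax), hxk⟩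
  -- F2 : XTR is in every bag on the chain
  have hXTRlow : ∀ x ∈ XTRset G C Q, ∃ j, t.anc imin j ∧ j ≠ imin ∧ x ∈ t.bag j := by
    rintro x ⟨hxC, ⟨a, haN, haL⟩, -⟩
    exact hlowbag x a haN haL
  have hXTRhigh : ∀ x ∈ XTRset G C Q, ∃ k, t.anc k imax ∧ k ≠ imax ∧ x ∈ t.bag k := by
    rintro x ⟨hxC, -, ⟨b, hbN, hbR⟩⟩
    exact hhighbag x b hbN hbR
  have hXTRbag : ∀ x ∈ XTRset G C Q, ∀ i, t.anc i imin → t.anc imax i → x ∈ t.bag i := by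
    intro x hx i h1 h2
    obtain ⟨j, hj1, -, hxj⟩ := hXTRlow x hx
    obtain ⟨k, hk1, -, hxk⟩ := hXTRhigh x hx
    exact aux_convex t hxj hxk (aux_anc_trans t h1 hj1) (aux_anc_trans t hk1 h2)
  have hXTRnC : ∀ x ∈ XTRset G C Q, x ∉ C := fun x hx => hx.1
  -- stepping above imax
  have haux : ∀ k, t.anc k imax → k ≠ imax → t.anc k (t.parent imax) := by
    intro k hk hne
    obtain ⟨n, hn⟩ := hk
    have hn0 : n ≠ 0 := by rintro rfl; simp at hn; exact hne hn.symm
    exact ⟨n - 1, by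
      rw [← Function.iterate_succ_apply, show (n-1).succ = n from by omega]; exact hn⟩
  -- the counting bound
  set B := Finset.univ.sup (fun i : ι => (t.bag i).card) with hB
  have hbagB : ∀ i : ι, (t.bag i).card ≤ B := fun i => Finset.le_sup (f := fun i : ι => (t.bag i).card) (Finset.mem_univ i)
  have hcount : ∀ (W : Set V) (i : ι), (∀ w ∈ W, w ∈ t.bag i) →
      (∀ c ∈ Q.XC, c ∈ t.bag i) → (∀ y ∈ XTRset G C Q, y ∈ t.bag i) →
      (∀ w ∈ W, w ∉ Q.XC) → (∀ w ∈ W, w ∉ XTRset G C Q) →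
      Q.XC.ncard + (XTRset G C Q).ncard + W.ncard ≤ B := by
    intro W i hW hXC' hXTR' hW1 hW2
    have hd1 : Disjoint Q.XC (XTRset G C Q) := by
      rw [Set.disjoint_left]; intro y hy hy2; exact hy2.1 (hXCsub hy)
    have hd2 : Disjoint (Q.XC ∪ XTRset G C Q) W := by
      rw [Set.disjoint_right]; rintro y hy (hy2 | hy2)
      · exact hW1 y hy hy2
      · exact hW2 y hy hy2
    have hsub : Q.XC ∪ XTRset G C Q ∪ W ⊆ ↑(t.bag i) := by
      rintro y ((hy | hy) | hy)
      · exact hXC' y hy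
      · exact hXTR' y hy
      · exact hW y hy
    calc Q.XC.ncard + (XTRset G C Q).ncard + W.ncard
        = (Q.XC ∪ XTRset G C Q ∪ W).ncard := by
          rw [Set.ncard_union_eq hd2 (Set.toFinite _) (Set.toFinite _),
            Set.ncard_union_eq hd1 (Set.toFinite _) (Set.toFinite _)]
      _ ≤ (↑(t.bag i) : Set V).ncard :=
          Set.ncard_le_ncard hsub (Set.toFinite _)
      _ = (t.bag i).card := Set.ncard_coe_finset _
      _ ≤ B := hbagB i
  -- the three branch bounds
  have hXLb : Q.XC.ncard + (XTRset G C Q).ncard + (XLset G C Q).ncard ≤ B := by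
    rcases hQt : Q.tauL with u | u | ⟨X, L1, L2⟩
    · -- introduce u
      rw [hQt] at hopL
      have hXLbag : ∀ x ∈ XLset G C Q, x ∈ t.bag imin := by
        intro x hx
        simp only [XLset, hQt, Set.mem_setOf_eq] at hx
        obtain ⟨hxC, hsub, huN, a, haN, haL⟩ := hx
        obtain ⟨j, hij, hjne, hxj⟩ := hlowbag x a haN haL
        by_contra hxmin
        obtain ⟨k, hxk, huk⟩ := t.bag_edge x u huN
        have hkmin : t.anc k imin := by
          rcases htot k imin with h | h
          · exact h
          · have hkne : k ≠ imin := by rintro rfl; exact hxmin hxk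
            rcases hopL with ⟨hch0, -⟩ | ⟨j', hch, hunj', hbag⟩
            · obtain ⟨c, hc, -⟩ := aux_desc_child t h (fun he => hkne he.symm)
              rw [hch0] at hc; exact absurd hc (Set.notMem_empty c)
            · have humin : u ∈ t.bag imin := by
                rw [hbag]; exact Finset.mem_insert_self u _
              obtain ⟨c, hc, hck⟩ := aux_desc_child t h (fun he => hkne he.symm)
              rw [hch] at hc
              have hj'c : j' ∈ t.children imin := by rw [hch]; exact rfl
              have hpj' : t.parent j' = imin := ((aux_mem_children t).mp hj'c).2
              have : u ∈ t.bag j' := aux_convex t huk humin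
                (Set.mem_singleton_iff.mp hc ▸ hck) (aux_parent_anc t hpj')
              exact absurd this hunj'
        exact hxmin (aux_convex t hxj hxk hij hkmin)
      refine hcount (XLset G C Q) imin hXLbag
        (fun c hc => hXCbag c hc imin (aux_anc_refl t imin) hancm)
        (fun y hy => hXTRbag y hy imin (aux_anc_refl t imin) hancm)
        (fun w hw => ?_) (fun w hw => ?_) <;>
        simp only [XLset, hQt, Set.mem_setOf_eq] at hw
      · exact fun hwX => hw.1 (hXCsub hwX)
      · rintro ⟨-, -, b, hbN, hbR⟩
        exact hRdisj b hbR (hw.2.1 hbN)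
    · -- forget u : XLset is empty
      have hXLe : XLset G C Q = ∅ := by simp [XLset, hQt]
      rw [hXLe, Set.ncard_empty]
      simpa using hcount ∅ imin (by simp)
        (fun c hc => hXCbag c hc imin (aux_anc_refl t imin) hancm)
        (fun y hy => hXTRbag y hy imin (aux_anc_refl t imin) hancm) (by simp) (by simp)
    · -- join : impossible
      rw [hQt] at hopL
      exact absurd hopL (hnjoin imin X L1 L2)
  have hXRb : Q.XC.ncard + (XTRset G C Q).ncard + (XRset G C Q).ncard ≤ B := by
    rcases hQr : Q.tauR with v | v | ⟨X, L1, L2⟩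
    · -- introduce : XRset is empty
      have hXRe : XRset G C Q = ∅ := by simp [XRset, hQr]
      rw [hXRe, Set.ncard_empty]
      simpa using hcount ∅ imin (by simp)
        (fun c hc => hXCbag c hc imin (aux_anc_refl t imin) hancm)
        (fun y hy => hXTRbag y hy imin (aux_anc_refl t imin) hancm) (by simp) (by simp)
    · -- forget v
      have hXRbag : ∀ x ∈ XRset G C Q, x ∈ t.bag imax := by
        intro x hx
        simp only [XRset, hQr, Set.mem_setOf_eq] at hx
        obtain ⟨hxC, hsub, hvN, b, hbN, hbR⟩ := hx
        rcases hRor with ⟨hroot, w, hbw, hQRw⟩ | ⟨hnroot, hopR⟩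
        · -- imax = root : RC is empty, contradiction
          exfalso
          rw [himax.2.2] at hbR
          obtain ⟨⟨-, hbns⟩, -⟩ := hbR
          obtain ⟨i0, hb0⟩ := t.bag_cover b
          exact hbns ⟨i0, hroot ▸ t.reaches_root i0, hb0⟩
        · rw [hQr] at hopR
          obtain ⟨j', hch, hvj', hbagp⟩ := hopR
          have himaxc : imax ∈ t.children (t.parent imax) := ⟨hnroot, rfl⟩
          rw [hch] at himaxc
          have hj' : j' = imax := (Set.mem_singleton_iff.mp himaxc).symm
          rw [hj'] at hvj' hbagp
          have hvp : v ∉ t.bag (t.parent imax) := by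
            rw [hbagp]; exact Finset.notMem_erase v _
          obtain ⟨k, hk1, hk2, hxk⟩ := hhighbag x b hbN hbR
          obtain ⟨j, hxj, hvj⟩ := t.bag_edge x v hvN
          rcases htot imax j with h | h
          · exact aux_convex t hxj hxk h hk1
          · by_cases hje : j = imax
            · exact hje ▸ hxj
            · exact absurd
                (aux_convex t hvj' hvj (aux_parent_anc t rfl) (haux j h hje)) hvp
      refine hcount (XRset G C Q) imax hXRbag
        (fun c hc => hXCbag c hc imax hancm (aux_anc_refl t imax))
        (fun y hy => hXTRbag y hy imax hancm (aux_anc_refl t imax))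
        (fun w hw => ?_) (fun w hw => ?_) <;>
        simp only [XRset, hQr, Set.mem_setOf_eq] at hw
      · exact fun hwX => hw.1 (hXCsub hwX)
      · rintro ⟨-, ⟨a, haN, haL⟩, -⟩
        exact hLdisj a haL (hw.2.1 haN)
    · -- join : XRset is empty
      have hXRe : XRset G C Q = ∅ := by simp [XRset, hQr]
      rw [hXRe, Set.ncard_empty]
      simpa using hcount ∅ imin (by simp)
        (fun c hc => hXCbag c hc imin (aux_anc_refl t imin) hancm)
        (fun y hy => hXTRbag y hy imin (aux_anc_refl t imin) hancm) (by simp) (by simp)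
  have hEpsb : Q.XC.ncard + (XTRset G C Q).ncard + epsP G C Q ≤ B := by
    by_cases hne : (XFPset G C Q).Nonempty
    case neg =>
      simp only [epsP, if_neg hne]
      simpa using hcount ∅ imin (by simp)
        (fun c hc => hXCbag c hc imin (aux_anc_refl t imin) hancm)
        (fun y hy => hXTRbag y hy imin (aux_anc_refl t imin) hancm) (by simp) (by simp)
    case pos =>
    simp only [epsP, if_pos hne]
    have hnode : ∀ (w : V) (i : ι), w ∈ t.bag i → (∀ c ∈ Q.XC, c ∈ t.bag i) →
        (∀ y ∈ XTRset G C Q, y ∈ t.bag i) → w ∉ Q.XC → w ∉ XTRset G C Q →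
        Q.XC.ncard + (XTRset G C Q).ncard + 1 ≤ B := by
      intro w i h1 h2 h3 h4 h5
      have := hcount {w} i
        (fun w' hw' => by rw [Set.mem_singleton_iff] at hw'; subst hw'; exact h1) h2 h3
        (fun w' hw' => by rw [Set.mem_singleton_iff] at hw'; subst hw'; exact h4)
        (fun w' hw' => by rw [Set.mem_singleton_iff] at hw'; subst hw'; exact h5)
      simpa using this
    obtain ⟨x, hxC, hNsub, hcondm, hcondp⟩ := hne
    have hxnX : x ∉ Q.XC := fun h => hxC (hXCsub h)
    have hxnT : x ∉ XTRset G C Q := by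
      rintro ⟨-, ⟨a, haN, haL⟩, -⟩
      exact hLXdisj a haL (hNsub haN)
    rcases hQt : Q.tauL with u | u | ⟨X, L1, L2⟩
    · -- tau- = introduce u
      rw [hQt] at hopL
      rcases hQr : Q.tauR with v | v | ⟨X, L1, L2⟩
      · -- tau+ = introduce v : use the parent of imax
        rcases hRor with ⟨-, w, -, hQRw⟩ | ⟨hnroot, hopR⟩
        · rw [hQr] at hQRw; cases hQRw
        · rw [hQr] at hopR
          rcases hopR with ⟨hch0, -⟩ | ⟨j', hch, hvnj', hbagp⟩
          · exact absurd (⟨hnroot, rfl⟩ : imax ∈ t.children (t.parent imax))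
              (Set.eq_empty_iff_forall_notMem.mp hch0 imax)
          · have himaxc : imax ∈ t.children (t.parent imax) := ⟨hnroot, rfl⟩
            rw [hch] at himaxc
            have hj' : j' = imax := (Set.mem_singleton_iff.mp himaxc).symm
            rw [hj'] at hvnj' hbagp
            refine hnode v (t.parent imax)
              (by rw [hbagp]; exact Finset.mem_insert_self v _) ?_ ?_ ?_ ?_
            · intro c hc
              rw [hbagp]
              exact Finset.mem_insert_of_mem (hXCbag c hc imax hancm (aux_anc_refl t imax))
            · intro y hy
              have hymax : y ∈ t.bag imax := hXTRbag y hy imax hancm (aux_anc_refl t imax)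
              rw [hbagp]
              exact Finset.mem_insert_of_mem hymax
            · intro h; exact hvnj' (hXCbag v h imax hancm (aux_anc_refl t imax))
            · intro h; exact hvnj' (hXTRbag v h imax hancm (aux_anc_refl t imax))
      · -- tau+ = forget v : main case
        by_cases hon : ∃ i, t.anc i imin ∧ t.anc imax i ∧ x ∈ t.bag i
        · obtain ⟨i, h1, h2, hxi⟩ := hon
          exact hnode x i hxi (fun c hc => hXCbag c hc i h1 h2)
            (fun y hy => hXTRbag y hy i h1 h2) hxnX hxnT
        · exfalso
          have hclass : ∀ j, x ∈ t.bag j →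
              (t.anc imin j ∧ j ≠ imin) ∨ (t.anc j imax ∧ j ≠ imax) := by
            intro j hj
            by_cases h1 : t.anc j imin
            · by_cases h2 : t.anc imax j
              · exact absurd ⟨j, h1, h2, hj⟩ hon
              · rcases htot imax j with h | h
                · exact absurd h h2
                · exact Or.inr ⟨h, fun he => h2 (he ▸ aux_anc_refl t imax)⟩
            · rcases htot j imin with h | h
              · exact absurd h h1
              · exact Or.inl ⟨h, fun he => h1 (he ▸ aux_anc_refl t imin)⟩
          obtain ⟨j0, hj0⟩ := t.bag_cover x
          rcases hclass j0 hj0 with ⟨hj01, hj02⟩ | ⟨hj01, hj02⟩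
          · -- all bags of x strictly below imin
            have hall : ∀ j, x ∈ t.bag j → t.anc imin j ∧ j ≠ imin := by
              intro j hj
              rcases hclass j hj with h | ⟨h1, h2⟩
              · exact h
              · exact absurd (aux_convex t hj0 hj hj01 (aux_anc_trans t h1 hancm))
                  (fun hx => hon ⟨imin, aux_anc_refl t imin, hancm, hx⟩)
            rcases hopL with ⟨hch0, -⟩ | ⟨j', hch, hunj', hbag⟩
            · obtain ⟨c, hc, -⟩ := aux_desc_child t (hall j0 hj0).1
                (fun he => (hall j0 hj0).2 he.symm)
              rw [hch0] at hc; exact Set.notMem_empty c hc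
            · have hj'c : j' ∈ t.children imin := by rw [hch]; exact rfl
              have hpj' : t.parent j' = imin := ((aux_mem_children t).mp hj'c).2
              have hanc' : t.anc imin j' := aux_parent_anc t hpj'
              have humin : u ∈ t.bag imin := by
                rw [hbag]; exact Finset.mem_insert_self u _
              have hkey : ∀ c ∈ G.neighborSet x, c ∈ t.bag j' := by
                intro c hcN
                have hcX : c ∈ Q.XC := hNsub hcN
                obtain ⟨k, hxk, hck⟩ := t.bag_edge x c hcN
                obtain ⟨hk1, hk2⟩ := hall k hxk
                obtain ⟨c0, hc0, hc0k⟩ := aux_desc_child t hk1 (fun he => hk2 he.symm)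
                rw [hch] at hc0
                exact aux_convex t hck (hXCbag c hcX imin (aux_anc_refl t imin) hancm)
                  (Set.mem_singleton_iff.mp hc0 ▸ hc0k) hanc'
              by_cases huC : u ∈ C
              · -- contradiction with the XCminus condition
                have huX : u ∈ Q.XC := by rw [himin.2.1]; exact ⟨humin, huC⟩
                have hm0 : XCminus Q = Q.XC \ {u} := by simp [XCminus, hQt]
                have hm1 : XCminus Q ⊂ Q.XC := by
                  rw [hm0]; exact Set.sdiff_singleton_ssubset.mpr huX
                refine hcondm hm1 ?_
                rw [hm0]
                intro c hcN
                refine ⟨hNsub hcN, fun hcu => ?_⟩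
                exact hunj' (Set.mem_singleton_iff.mp hcu ▸ hkey c hcN)
              · -- u ∉ C : the child j' has the same trace, contradiction
                have hbagsub : ↑(t.bag j') ⊆ t.subVerts j' :=
                  fun y hy => ⟨j', aux_anc_refl t j', hy⟩
                have hbagc : (↑(t.bag imin) : Set V) = insert u ↑(t.bag j') := by
                  rw [hbag, Finset.coe_insert]
                have hsv : t.subVerts imin = insert u (t.subVerts j') := by
                  rw [aux_subverts_child t ht hch, hbagc, Set.insert_union,
                    Set.union_eq_self_of_subset_left hbagsub]
                have hunsv : u ∉ t.subVerts j' := by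
                  rintro ⟨k, hk, huk⟩
                  exact hunj' (aux_convex t huk humin hk hanc')
                have hLs : t.Lset imin = t.Lset j' := by
                  unfold RootedTreeDecomp.Lset
                  rw [hsv, hbagc]
                  ext y
                  simp only [Set.mem_diff, Set.mem_insert_iff]
                  constructor
                  · rintro ⟨hy1 | hy1, hy2⟩
                    · exact absurd (Or.inl hy1) hy2
                    · exact ⟨hy1, fun h => hy2 (Or.inr h)⟩
                  · rintro ⟨hy1, hy2⟩
                    exact ⟨Or.inr hy1, fun h => h.elim (fun he => hunsv (he ▸ hy1)) hy2⟩
                have hRs : t.Rset j' ∩ C = t.Rset imin ∩ C := by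
                  unfold RootedTreeDecomp.Rset
                  rw [hsv]
                  ext y
                  simp only [Set.mem_inter_iff, Set.mem_diff, Set.mem_univ, true_and,
                    Set.mem_insert_iff]
                  constructor
                  · rintro ⟨hy1, hyC⟩
                    exact ⟨fun h => h.elim (fun he => huC (he ▸ hyC)) hy1, hyC⟩
                  · rintro ⟨hy1, hyC⟩
                    exact ⟨fun h => hy1 (Or.inr h), hyC⟩
                have hXs : (↑(t.bag j') : Set V) ∩ C = Q.XC := by
                  rw [himin.2.1, hbagc]
                  ext y
                  simp only [Set.mem_inter_iff, Set.mem_insert_iff]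
                  constructor
                  · rintro ⟨hy1, hyC⟩; exact ⟨Or.inr hy1, hyC⟩
                  · rintro ⟨hy1 | hy1, hyC⟩
                    · exact absurd (hy1 ▸ hyC) huC
                    · exact ⟨hy1, hyC⟩
                have htr : t.HasTrace C j' Q.LC Q.XC Q.RC :=
                  ⟨by rw [himin.1, hLs], hXs.symm, by rw [himin.2.2]; exact hRs.symm⟩
                obtain ⟨ha1, -⟩ := hext j' htr
                have hji : j' = imin := aux_anc_antisymm t ha1 hanc'
                exact ((aux_mem_children t).mp hj'c).1 (hji.trans (aux_root_fix t (hji ▸ hpj')))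
          · -- all bags of x strictly above imax
            have hall : ∀ j, x ∈ t.bag j → t.anc j imax ∧ j ≠ imax := by
              intro j hj
              rcases hclass j hj with ⟨h1, h2⟩ | h
              · exact absurd (aux_convex t hj hj0 h1 (aux_anc_trans t hj01 hancm))
                  (fun hx => hon ⟨imin, aux_anc_refl t imin, hancm, hx⟩)
              · exact h
            rcases hRor with ⟨hroot, -⟩ | ⟨hnroot, hopR⟩
            · obtain ⟨h1, h2⟩ := hall j0 hj0
              exact h2 (aux_anc_antisymm t h1 (hroot ▸ t.reaches_root j0))
            · rw [hQr] at hopR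
              obtain ⟨j', hch, hvj', hbagp⟩ := hopR
              have himaxc : imax ∈ t.children (t.parent imax) := ⟨hnroot, rfl⟩
              rw [hch] at himaxc
              have hj' : j' = imax := (Set.mem_singleton_iff.mp himaxc).symm
              rw [hj'] at hvj' hbagp
              have hvp : v ∉ t.bag (t.parent imax) := by
                rw [hbagp]; exact Finset.notMem_erase v _
              have hkey : ∀ c ∈ G.neighborSet x, c ∈ t.bag (t.parent imax) := by
                intro c hcN
                have hcX : c ∈ Q.XC := hNsub hcN
                obtain ⟨k, hxk, hck⟩ := t.bag_edge x c hcN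
                obtain ⟨hk1, hk2⟩ := hall k hxk
                exact aux_convex t (hXCbag c hcX imax hancm (aux_anc_refl t imax)) hck
                  (aux_parent_anc t rfl) (haux k hk1 hk2)
              by_cases hvC : v ∈ C
              · have hvX : v ∈ Q.XC := by rw [himax.2.1]; exact ⟨hvj', hvC⟩
                have hp0 : XCplus Q = Q.XC \ {v} := by simp [XCplus, hQr]
                have hp1 : XCplus Q ⊂ Q.XC := by
                  rw [hp0]; exact Set.sdiff_singleton_ssubset.mpr hvX
                refine hcondp hp1 ?_
                rw [hp0]
                intro c hcN
                refine ⟨hNsub hcN, fun hcv => ?_⟩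
                have hcb := hkey c hcN
                rw [Set.mem_singleton_iff.mp hcv] at hcb
                exact hvp hcb
              · -- v ∉ C : the parent of imax has the same trace, contradiction
                have hchp : t.children (t.parent imax) = {imax} := by rw [hch, hj']
                have hbagsub : ↑(t.bag (t.parent imax)) ⊆ t.subVerts imax := by
                  rw [hbagp]
                  intro y hy
                  exact ⟨imax, aux_anc_refl t imax, Finset.mem_of_mem_erase hy⟩
                have hsv : t.subVerts (t.parent imax) = t.subVerts imax := by
                  rw [aux_subverts_child t ht hchp]
                  exact Set.union_eq_self_of_subset_left hbagsub
                have hbagc : (↑(t.bag (t.parent imax)) : Set V) = ↑(t.bag imax) \ {v} := by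
                  rw [hbagp, Finset.coe_erase]
                have htr : t.HasTrace C (t.parent imax) Q.LC Q.XC Q.RC := by
                  refine ⟨?_, ?_, ?_⟩
                  · rw [himax.1]
                    unfold RootedTreeDecomp.Lset
                    rw [hsv, hbagc]
                    ext y
                    simp only [Set.mem_inter_iff, Set.mem_diff, Set.mem_singleton_iff]
                    constructor
                    · rintro ⟨⟨hy1, hy2⟩, hyC⟩
                      exact ⟨⟨hy1, fun h => hy2 h.1⟩, hyC⟩
                    · rintro ⟨⟨hy1, hy2⟩, hyC⟩
                      exact ⟨⟨hy1, fun h => hy2 ⟨h, fun he => hvC (he ▸ hyC)⟩⟩, hyC⟩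
                  · rw [himax.2.1, hbagc]
                    ext y
                    simp only [Set.mem_inter_iff, Set.mem_diff, Set.mem_singleton_iff]
                    constructor
                    · rintro ⟨hy1, hyC⟩
                      exact ⟨⟨hy1, fun he => hvC (he ▸ hyC)⟩, hyC⟩
                    · rintro ⟨⟨hy1, -⟩, hyC⟩; exact ⟨hy1, hyC⟩
                  · rw [himax.2.2]
                    unfold RootedTreeDecomp.Rset
                    rw [hsv]
                obtain ⟨-, ha2⟩ := hext (t.parent imax) htr
                exact hnroot (aux_root_fix t
                  (aux_anc_antisymm t (aux_parent_anc t rfl) ha2))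
      · -- tau+ = join : impossible
        rcases hRor with ⟨-, w, -, hQRw⟩ | ⟨hnroot, hopR⟩
        · rw [hQr] at hQRw; cases hQRw
        · rw [hQr] at hopR; exact absurd hopR (hnjoin _ X L1 L2)
    · -- tau- = forget u : the child of imin gives a big bag
      rw [hQt] at hopL
      obtain ⟨j', hch, huj', hbag⟩ := hopL
      have hj'c : j' ∈ t.children imin := by rw [hch]; exact rfl
      have hpj' : t.parent j' = imin := ((aux_mem_children t).mp hj'c).2
      have hanc' : t.anc imin j' := aux_parent_anc t hpj'
      have hub : u ∉ t.bag imin := by rw [hbag]; exact Finset.notMem_erase u _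
      refine hnode u j' huj' ?_ ?_ ?_ ?_
      · intro c hc
        have h1 : c ∈ t.bag imin := hXCbag c hc imin (aux_anc_refl t imin) hancm
        rw [hbag] at h1; exact Finset.mem_of_mem_erase h1
      · intro y hy
        obtain ⟨jl, hjl, hjlne, hyjl⟩ := hXTRlow y hy
        have hymin : y ∈ t.bag imin := hXTRbag y hy imin (aux_anc_refl t imin) hancm
        obtain ⟨c, hc, hcjl⟩ := aux_desc_child t hjl (fun he => hjlne he.symm)
        rw [hch] at hc
        exact aux_convex t hyjl hymin (Set.mem_singleton_iff.mp hc ▸ hcjl) hanc'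
      · intro h; exact hub (hXCbag u h imin (aux_anc_refl t imin) hancm)
      · intro h; exact hub (hXTRbag u h imin (aux_anc_refl t imin) hancm)
    · -- tau- = join : impossible
      rw [hQt] at hopL
      exact absurd hopL (hnjoin imin X L1 L2)
  -- assembling
  have hfinal : Q.XC.ncard + (XTRset G C Q).ncard +
      max (max (XLset G C Q).ncard (XRset G C Q).ncard) (epsP G C Q) ≤ B := by
    rw [← max_add_add_left, ← max_add_add_left]
    exact max_le (max_le hXLb hXRb) hEpsb
  show Q.XC.ncard + (XTRset G C Q).ncard +
      max (max (XLset G C Q).ncard (XRset G C Q).ncard) (epsP G C Q) - 1 ≤ B - 1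
  exact Nat.sub_le_sub_right hfinal 1
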